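/- (Schwartz–Zippel with multiplicities) Let F be a nonzero polynomial in F_q[X_1,...,X_m] of total degree at most d. Then Σ_{P ∈ F_q^m} mult(F, P) ≤ d·q^{m-1}, where mult(F,P) is the multiplicity of F at P, i.e., the largest integer M such that all Hasse derivatives H_i(F) of weight |i| < M vanish at P. -/

import Mathlib

/-- The `i`-th Hasse derivative of a multivariate polynomial `F`: the coefficient of `Z^i`
in `F(X + Z)`. -/
noncomputable def mvHasseDeriv {K : Type*} [CommRing K] {m : ℕ} (i : Fin m →₀ ℕ)
    (F : MvPolynomial (Fin m) K) : MvPolynomial (Fin m) K :=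
  MvPolynomial.coeff i
    (MvPolynomial.eval₂ (MvPolynomial.C.comp MvPolynomial.C)
      (fun j => MvPolynomial.C (MvPolynomial.X j) + MvPolynomial.X j) F)

/-- The multiplicity of `F` at a point `P`: the largest `M` such that all Hasse
derivatives of weight `< M` vanish at `P`. -/
noncomputable def mvMult {K : Type*} [CommRing K] {m : ℕ}
    (F : MvPolynomial (Fin m) K) (P : Fin m → K) : ℕ :=
  sSup {M : ℕ | ∀ i : Fin m →₀ ℕ, (i.sum fun _ n => n) < M →
    MvPolynomial.eval P (mvHasseDeriv i F) = 0}

open MvPolynomial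

/-- Shifting (translating) a multivariate polynomial by a point `P`. -/
noncomputable def mvShift {K : Type*} [CommRing K] {m : ℕ} (P : Fin m → K) :
    MvPolynomial (Fin m) K →ₐ[K] MvPolynomial (Fin m) K :=
  aeval (fun j => MvPolynomial.X j + MvPolynomial.C (P j))

lemma mvShift_mvShift {K : Type*} [CommRing K] {m : ℕ} (P Q : Fin m → K)
    (F : MvPolynomial (Fin m) K) : mvShift P (mvShift Q F) = mvShift (P + Q) F := by
  have h : (mvShift P).comp (mvShift Q) = mvShift (P + Q) := by
    apply MvPolynomial.algHom_ext
    intro j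
    simp [mvShift, add_assoc]
  exact congrArg (fun (φ : _ →ₐ[K] _) => φ F) h

lemma mvShift_zero {K : Type*} [CommRing K] {m : ℕ} (F : MvPolynomial (Fin m) K) :
    mvShift 0 F = F := by
  have h : mvShift (0 : Fin m → K) = AlgHom.id K _ := by
    apply MvPolynomial.algHom_ext
    intro j
    simp [mvShift]
  rw [h]; rfl

lemma mvShift_ne_zero {K : Type*} [CommRing K] {m : ℕ} (P : Fin m → K)
    {F : MvPolynomial (Fin m) K} (hF : F ≠ 0) : mvShift P F ≠ 0 := by
  intro h
  apply hF
  have := congrArg (mvShift (-P)) h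
  rwa [mvShift_mvShift, neg_add_cancel, mvShift_zero, map_zero] at this

lemma eval_mvHasseDeriv {K : Type*} [CommRing K] {m : ℕ} (i : Fin m →₀ ℕ)
    (F : MvPolynomial (Fin m) K) (P : Fin m → K) :
    eval P (mvHasseDeriv i F) = coeff i (mvShift P F) := by
  have key : MvPolynomial.map (eval P)
      (MvPolynomial.eval₂ (MvPolynomial.C.comp MvPolynomial.C)
        (fun j => MvPolynomial.C (MvPolynomial.X j) + MvPolynomial.X j) F)
      = mvShift P F := by
    have h : ((MvPolynomial.map (eval P)).comp
        (eval₂Hom (MvPolynomial.C.comp MvPolynomial.C)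
          (fun j : Fin m => MvPolynomial.C (MvPolynomial.X j) + MvPolynomial.X j)))
        = ((mvShift P : MvPolynomial (Fin m) K →ₐ[K] _) : MvPolynomial (Fin m) K →+* _) := by
      apply MvPolynomial.ringHom_ext
      · intro c; simp [mvShift]
      · intro j; simp [mvShift, add_comm]
    exact congrArg (fun (φ : _ →+* _) => φ F) h
  rw [mvHasseDeriv, ← key, coeff_map]

lemma mvMult_spec {K : Type*} [CommRing K] {m : ℕ} {F : MvPolynomial (Fin m) K} (hF : F ≠ 0)
    (P : Fin m → K) :
    (∀ i : Fin m →₀ ℕ, (i.sum fun _ n => n) < mvMult F P → coeff i (mvShift P F) = 0) ∧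
    ∃ i : Fin m →₀ ℕ, (i.sum fun _ n => n) = mvMult F P ∧ coeff i (mvShift P F) ≠ 0 := by
  set S := {M : ℕ | ∀ i : Fin m →₀ ℕ, (i.sum fun _ n => n) < M → coeff i (mvShift P F) = 0}
    with hS
  have hmult : mvMult F P = sSup S := by
    unfold mvMult; congr 1; ext M
    simp only [Set.mem_setOf_eq, eval_mvHasseDeriv, hS]
  obtain ⟨i₀, hi₀⟩ : ∃ i₀, coeff i₀ (mvShift P F) ≠ 0 := by
    by_contra h; push_neg at h
    exact mvShift_ne_zero P hF (MvPolynomial.ext _ _ fun i => by simpa using h i)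
  have hbdd : BddAbove S := ⟨(i₀.sum fun _ n => n), fun M hM => by
    by_contra hlt; push_neg at hlt; exact hi₀ (hM i₀ hlt)⟩
  have h0 : 0 ∈ S := fun i h => absurd h (Nat.not_lt_zero _)
  have hmem : sSup S ∈ S := Nat.sSup_mem ⟨0, h0⟩ hbdd
  refine ⟨by rw [hmult]; exact hmem, ?_⟩
  have hnot : sSup S + 1 ∉ S := fun h => by simpa using le_csSup hbdd h
  have hnot2 : ¬ ∀ i : Fin m →₀ ℕ, (i.sum fun _ n => n) < sSup S + 1 →
      coeff i (mvShift P F) = 0 := hnot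
  push_neg at hnot2
  obtain ⟨i, hlt, hne⟩ := hnot2
  refine ⟨i, ?_, hne⟩
  rw [hmult]
  have hge : ¬ (i.sum fun _ n => n) < sSup S := fun hc => hne (hmem i hc)
  omega

lemma finSuccEquiv_mvShift_tail {K : Type*} [CommRing K] {n : ℕ} (a : Fin n → K)
    (F : MvPolynomial (Fin (n+1)) K) :
    MvPolynomial.finSuccEquiv K n (mvShift (Fin.cons 0 a) F)
      = (MvPolynomial.finSuccEquiv K n F).map (mvShift a).toRingHom := by
  have h : ((MvPolynomial.finSuccEquiv K n).toAlgHom).comp (mvShift (Fin.cons 0 a))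
      = (Polynomial.mapAlgHom (mvShift a)).comp (MvPolynomial.finSuccEquiv K n).toAlgHom := by
    apply MvPolynomial.algHom_ext
    intro j
    refine Fin.cases ?_ ?_ j
    · simp [mvShift, finSuccEquiv_X_zero, finSuccEquiv_apply]
    · intro k
      simp [mvShift, finSuccEquiv_X_succ, finSuccEquiv_apply]
  exact congrArg (fun (φ : _ →ₐ[K] _) => φ F) h

lemma finSuccEquiv_mvShift_head {K : Type*} [CommRing K] {n : ℕ} (b : K)
    (F : MvPolynomial (Fin (n+1)) K) :
    MvPolynomial.finSuccEquiv K n (mvShift (Fin.cons b 0) F)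
      = Polynomial.taylor (MvPolynomial.C b) (MvPolynomial.finSuccEquiv K n F) := by
  have h : ((MvPolynomial.finSuccEquiv K n).toAlgHom).comp (mvShift (Fin.cons b 0))
      = ((Polynomial.aeval (Polynomial.X + Polynomial.C (MvPolynomial.C b)) :
          Polynomial (MvPolynomial (Fin n) K) →ₐ[MvPolynomial (Fin n) K] _).restrictScalars K).comp
        (MvPolynomial.finSuccEquiv K n).toAlgHom := by
    apply MvPolynomial.algHom_ext
    intro j
    refine Fin.cases ?_ ?_ j
    · simp [mvShift, finSuccEquiv_X_zero, finSuccEquiv_apply]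
    · intro k
      simp [mvShift, finSuccEquiv_X_succ, finSuccEquiv_apply]
  have h2 := congrArg (fun (φ : _ →ₐ[K] _) => φ F) h
  simp only [AlgHom.coe_comp, Function.comp_apply, AlgHom.coe_restrictScalars',
    AlgEquiv.toAlgHom_eq_coe, AlgHom.coe_coe, AlgEquiv.coe_toAlgHom] at h2
  rw [h2, Polynomial.taylor_apply]
  simp [Polynomial.aeval_def, Polynomial.comp, Polynomial.algebraMap_eq]

lemma taylor_coeff_comm {K : Type*} [CommRing K] {n : ℕ} (i : Fin n →₀ ℕ)
    (ft : Polynomial (MvPolynomial (Fin n) K)) (h : Polynomial K)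
    (hcoeff : ∀ k, h.coeff k = MvPolynomial.coeff i (ft.coeff k)) (b : K) (k : ℕ) :
    (Polynomial.taylor b h).coeff k
      = MvPolynomial.coeff i ((Polynomial.taylor (MvPolynomial.C b) ft).coeff k) := by
  rw [Polynomial.taylor_coeff, Polynomial.taylor_coeff]
  set N := ft.natDegree + h.natDegree + 1 with hN
  have h1 : (Polynomial.hasseDeriv k h).natDegree < N :=
    lt_of_le_of_lt (Polynomial.natDegree_hasseDeriv_le _ _) (by omega)
  have h2 : (Polynomial.hasseDeriv k ft).natDegree < N :=
    lt_of_le_of_lt (Polynomial.natDegree_hasseDeriv_le _ _) (by omega)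
  rw [Polynomial.eval_eq_sum_range' h1, Polynomial.eval_eq_sum_range' h2]
  rw [MvPolynomial.coeff_sum]
  apply Finset.sum_congr rfl
  intro j _
  rw [Polynomial.hasseDeriv_coeff, Polynomial.hasseDeriv_coeff, hcoeff]
  rw [← map_pow MvPolynomial.C b j, ← MvPolynomial.C_eq_coe_nat,
    mul_comm (MvPolynomial.C _ * ft.coeff (j + k)) (MvPolynomial.C (b ^ j)),
    MvPolynomial.coeff_C_mul, MvPolynomial.coeff_C_mul]
  ring

open Finset in
lemma key_step {Fq : Type*} [Field Fq] [Fintype Fq] {n : ℕ}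
    (F : MvPolynomial (Fin (n+1)) Fq) (hF : F ≠ 0) (a : Fin n → Fq) :
    ∑ b : Fq, mvMult F (Fin.cons b a) ≤
      Fintype.card Fq * mvMult ((MvPolynomial.finSuccEquiv Fq n F).leadingCoeff) a
        + (MvPolynomial.finSuccEquiv Fq n F).natDegree := by
  classical
  set f := MvPolynomial.finSuccEquiv Fq n F with hf
  set t := f.natDegree with ht
  set Ft := f.leadingCoeff with hFt
  have hfne : f ≠ 0 := by
    intro h0
    exact hF ((MvPolynomial.finSuccEquiv Fq n).injective (h0.trans (map_zero _).symm))
  have hFtne : Ft ≠ 0 := Polynomial.leadingCoeff_ne_zero.2 hfne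
  set m1 := mvMult Ft a with hm1
  obtain ⟨hFt_vanish, i, hi_wt, hi_ne⟩ := mvMult_spec hFtne a
  set ft : Polynomial (MvPolynomial (Fin n) Fq) := f.map (mvShift a).toRingHom with hft
  have hft_eq : MvPolynomial.finSuccEquiv Fq n (mvShift (Fin.cons 0 a) F) = ft :=
    finSuccEquiv_mvShift_tail a F
  set h : Polynomial Fq :=
    ∑ k ∈ Finset.range (t+1), Polynomial.C (MvPolynomial.coeff i (ft.coeff k))
      * Polynomial.X ^ k with hh
  have hcoeff : ∀ k, h.coeff k = MvPolynomial.coeff i (ft.coeff k) := by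
    intro k
    rw [hh, Polynomial.finset_sum_coeff]
    simp only [Polynomial.coeff_C_mul, Polynomial.coeff_X_pow, mul_ite, mul_one, mul_zero]
    rw [Finset.sum_ite_eq (Finset.range (t+1)) k]
    split
    · rfl
    · rename_i hk
      have hk' : t < k := by
        simp only [Finset.mem_range] at hk; omega
      have : ft.coeff k = 0 := Polynomial.coeff_eq_zero_of_natDegree_lt
        (lt_of_le_of_lt Polynomial.natDegree_map_le hk')
      simp [this]
  have hht : h.coeff t = MvPolynomial.coeff i (mvShift a Ft) := by
    rw [hcoeff, hft, Polynomial.coeff_map]; rfl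
  have hhne : h ≠ 0 := fun h0 => hi_ne (by rw [← hht, h0, Polynomial.coeff_zero])
  have hdegh : h.natDegree ≤ t := by
    rw [Polynomial.natDegree_le_iff_coeff_eq_zero]
    intro k hk
    rw [hcoeff]
    have : ft.coeff k = 0 := Polynomial.coeff_eq_zero_of_natDegree_lt
      (lt_of_le_of_lt Polynomial.natDegree_map_le hk)
    simp [this]
  -- key per-point bound
  have hb : ∀ b : Fq, mvMult F (Fin.cons b a) ≤ m1 + h.rootMultiplicity b := by
    intro b
    set M := mvMult F (Fin.cons b a) with hM
    have hMa := (mvMult_spec hF (Fin.cons b a)).1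
    have htaylor : Polynomial.taylor (MvPolynomial.C b) ft
        = MvPolynomial.finSuccEquiv Fq n (mvShift (Fin.cons b a) F) := by
      have hconsadd : (Fin.cons b (0 : Fin n → Fq) + Fin.cons (0 : Fq) a : Fin (n+1) → Fq)
          = Fin.cons b a := by
        funext j
        induction j using Fin.cases <;> simp [Pi.add_apply, Fin.cons_succ, Fin.cons_zero]
      rw [← hft_eq, ← finSuccEquiv_mvShift_head, mvShift_mvShift, hconsadd]
    have key : (M - m1) ≤ h.rootMultiplicity b := by
      rw [Polynomial.le_rootMultiplicity_iff hhne]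
      have hdvd : Polynomial.X ^ (M - m1) ∣ Polynomial.taylor b h := by
        rw [Polynomial.X_pow_dvd_iff]
        intro k hk
        rw [taylor_coeff_comm i ft h hcoeff b k, htaylor,
          MvPolynomial.finSuccEquiv_coeff_coeff]
        apply hMa
        rw [Finsupp.sum_cons, hi_wt]
        omega
      obtain ⟨u, hu⟩ := hdvd
      refine ⟨Polynomial.taylor (-b) u, ?_⟩
      have h3 := congrArg (Polynomial.taylor (-b)) hu
      rw [Polynomial.taylor_taylor] at h3
      rw [Polynomial.taylor_mul] at h3
      rw [neg_add_cancel, Polynomial.taylor_zero] at h3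
      rw [h3, Polynomial.taylor_apply, Polynomial.X_pow_comp]
      rw [map_neg, ← sub_eq_add_neg]
    calc M ≤ m1 + (M - m1) := le_add_tsub
      _ ≤ m1 + h.rootMultiplicity b := Nat.add_le_add_left key m1
  calc ∑ b : Fq, mvMult F (Fin.cons b a)
      ≤ ∑ _b : Fq, m1 + ∑ b : Fq, h.rootMultiplicity b := by
        rw [← Finset.sum_add_distrib]
        exact Finset.sum_le_sum fun b _ => hb b
    _ ≤ Fintype.card Fq * m1 + t := by
        refine Nat.add_le_add (le_of_eq ?_) ?_
        · rw [Finset.sum_const, Finset.card_univ, smul_eq_mul]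
        · have hc : ∀ b : Fq, h.rootMultiplicity b = h.roots.count b :=
            fun b => (Polynomial.count_roots h).symm
          calc ∑ b : Fq, h.rootMultiplicity b = ∑ b : Fq, h.roots.count b := by
                exact Finset.sum_congr rfl fun b _ => hc b
            _ = ∑ b ∈ h.roots.toFinset, h.roots.count b := by
                refine (Finset.sum_subset (Finset.subset_univ _) ?_).symm
                intro x _ hx
                exact Multiset.count_eq_zero_of_notMem (by simpa using hx)
            _ = Multiset.card h.roots := Multiset.toFinset_sum_count_eq _
            _ ≤ h.natDegree := Polynomial.card_roots' h
            _ ≤ t := hdegh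

open Finset in
lemma schwartz_zippel_mult_aux {Fq : Type*} [Field Fq] [Fintype Fq] :
    ∀ (n : ℕ) (F : MvPolynomial (Fin n) Fq), F ≠ 0 →
      Fintype.card Fq * ∑ P : Fin n → Fq, mvMult F P
        ≤ F.totalDegree * Fintype.card Fq ^ n := by
  intro n
  induction n with
  | zero =>
    intro F hF
    have hz : ∀ P : Fin 0 → Fq, mvMult F P = 0 := by
      intro P
      obtain ⟨_, i, hwt, _⟩ := mvMult_spec hF P
      rw [← hwt, Subsingleton.elim i 0, Finsupp.sum_zero_index]
    simp [hz]
  | succ n ih =>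
    intro F hF
    have hfne : MvPolynomial.finSuccEquiv Fq n F ≠ 0 := fun h0 =>
      hF ((MvPolynomial.finSuccEquiv Fq n).injective (h0.trans (map_zero _).symm))
    have hFtne : (MvPolynomial.finSuccEquiv Fq n F).leadingCoeff ≠ 0 :=
      Polynomial.leadingCoeff_ne_zero.2 hfne
    have hsum : ∑ P : Fin (n+1) → Fq, mvMult F P
        = ∑ a : Fin n → Fq, ∑ b : Fq, mvMult F (Fin.cons b a) := by
      rw [← (Fin.consEquiv (fun _ : Fin (n+1) => Fq)).sum_comp (fun P => mvMult F P)]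
      rw [Fintype.sum_prod_type]
      rw [Finset.sum_comm]
      apply Finset.sum_congr rfl
      intro a _
      apply Finset.sum_congr rfl
      intro b _
      congr 1
    have htot : (MvPolynomial.finSuccEquiv Fq n F).leadingCoeff.totalDegree
        + (MvPolynomial.finSuccEquiv Fq n F).natDegree ≤ F.totalDegree := by
      have hcne : (MvPolynomial.finSuccEquiv Fq n F).coeff
          (MvPolynomial.finSuccEquiv Fq n F).natDegree ≠ 0 := by
        rw [Polynomial.coeff_natDegree]; exact hFtne
      have h6 := MvPolynomial.totalDegree_coeff_finSuccEquiv_add_le F _ hcne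
      rwa [Polynomial.coeff_natDegree] at h6
    have hq : Fintype.card (Fin n → Fq) = Fintype.card Fq ^ n := by
      rw [Fintype.card_fun, Fintype.card_fin]
    calc Fintype.card Fq * ∑ P : Fin (n+1) → Fq, mvMult F P
        = Fintype.card Fq * ∑ a : Fin n → Fq, ∑ b : Fq, mvMult F (Fin.cons b a) := by
          rw [hsum]
      _ ≤ Fintype.card Fq * ∑ a : Fin n → Fq,
            (Fintype.card Fq * mvMult (MvPolynomial.finSuccEquiv Fq n F).leadingCoeff a
              + (MvPolynomial.finSuccEquiv Fq n F).natDegree) :=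
          Nat.mul_le_mul_left _ (Finset.sum_le_sum fun a _ => key_step F hF a)
      _ = Fintype.card Fq * (Fintype.card Fq *
            ∑ a : Fin n → Fq, mvMult (MvPolynomial.finSuccEquiv Fq n F).leadingCoeff a)
            + (MvPolynomial.finSuccEquiv Fq n F).natDegree * Fintype.card Fq ^ (n+1) := by
          rw [Finset.sum_add_distrib, Finset.sum_const, Finset.card_univ, hq, smul_eq_mul,
            ← Finset.mul_sum]
          ring
      _ ≤ Fintype.card Fq *
            ((MvPolynomial.finSuccEquiv Fq n F).leadingCoeff.totalDegree * Fintype.card Fq ^ n)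
            + (MvPolynomial.finSuccEquiv Fq n F).natDegree * Fintype.card Fq ^ (n+1) :=
          Nat.add_le_add_right (Nat.mul_le_mul_left _
            (ih (MvPolynomial.finSuccEquiv Fq n F).leadingCoeff hFtne)) _
      _ = ((MvPolynomial.finSuccEquiv Fq n F).leadingCoeff.totalDegree
            + (MvPolynomial.finSuccEquiv Fq n F).natDegree) * Fintype.card Fq ^ (n+1) := by
          ring
      _ ≤ F.totalDegree * Fintype.card Fq ^ (n+1) := Nat.mul_le_mul_right _ htot

open Finset in
/-- Schwartz–Zippel with multiplicities: for nonzero `F` of total degree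
at most `d`, `Σ_{P ∈ F_q^m} mult(F,P) ≤ d·q^{m-1}`. -/
theorem schwartz_zippel_mult {Fq : Type*} [Field Fq] [Fintype Fq] {m d : ℕ} (hm : 1 ≤ m)
    (F : MvPolynomial (Fin m) Fq) (hF : F ≠ 0) (hdeg : F.totalDegree ≤ d) :
    ∑ P : Fin m → Fq, mvMult F P ≤ d * Fintype.card Fq ^ (m - 1) := by
  obtain ⟨n, rfl⟩ : ∃ n, m = n + 1 := ⟨m - 1, (Nat.succ_pred_eq_of_pos hm).symm⟩
  have haux := schwartz_zippel_mult_aux (n+1) F hF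
  have h1 : Fintype.card Fq * ∑ P : Fin (n+1) → Fq, mvMult F P
      ≤ Fintype.card Fq * (d * Fintype.card Fq ^ n) := by
    calc Fintype.card Fq * ∑ P : Fin (n+1) → Fq, mvMult F P
        ≤ F.totalDegree * Fintype.card Fq ^ (n+1) := haux
      _ ≤ d * Fintype.card Fq ^ (n+1) := Nat.mul_le_mul_right _ hdeg
      _ = Fintype.card Fq * (d * Fintype.card Fq ^ n) := by ring
  have hqpos : 0 < Fintype.card Fq := Fintype.card_pos
  simpa using Nat.le_of_mul_le_mul_left h1 hqpos
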